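/- Let G = H ≀ ℤ with base A, and suppose g = w t^k with w ∈ A and k ≠ 0. Then for any nontrivial v ∈ A, v does not commute with g; i.e., C_G(g) ∩ A = {1}. -/

import Mathlib

open Function

variable (H : Type*) [Group H]

/-- The base of the restricted wreath product `H ≀ ℤ`: finitely supported functions `ℤ → H`. -/
def RWBase : Subgroup (ℤ → H) where
  carrier := {f | (mulSupport f).Finite}
  one_mem' := by simp [mulSupport_one]
  mul_mem' := fun hf hg => ((hf.union hg).subset (mulSupport_mul _ _))
  inv_mem' := fun hf => by simpa [mulSupport_inv] using hf

/-- The shift automorphism of the base. -/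
def shiftAut (k : ℤ) : MulAut (RWBase H) where
  toFun f := ⟨fun i => (f : ℤ → H) (i - k), by
    have h : (mulSupport fun i => (f : ℤ → H) (i - k)) =
        (fun i : ℤ => i - k) ⁻¹' mulSupport (f : ℤ → H) := rfl
    show (mulSupport fun i => (f : ℤ → H) (i - k)).Finite
    rw [h]
    exact f.2.preimage (Function.Injective.injOn (f := fun i : ℤ => i - k) fun a b hab => by simpa using hab)⟩
  invFun f := ⟨fun i => (f : ℤ → H) (i + k), by
    have h : (mulSupport fun i => (f : ℤ → H) (i + k)) =
        (fun i : ℤ => i + k) ⁻¹' mulSupport (f : ℤ → H) := rfl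
    show (mulSupport fun i => (f : ℤ → H) (i + k)).Finite
    rw [h]
    exact f.2.preimage (Function.Injective.injOn (f := fun i : ℤ => i + k) fun a b hab => by simpa using hab)⟩
  left_inv f := Subtype.ext (funext fun i => by simp)
  right_inv f := Subtype.ext (funext fun i => by simp)
  map_mul' f g := rfl

/-- The action of `ℤ` on the base by shifting. -/
def shiftHom : Multiplicative ℤ →* MulAut (RWBase H) where
  toFun k := shiftAut H (Multiplicative.toAdd k)
  map_one' := MulEquiv.ext fun f => Subtype.ext (funext fun i => by simp [shiftAut])
  map_mul' k l := MulEquiv.ext fun f => Subtype.ext (funext fun i => by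
    simp [shiftAut, sub_sub])

/-- The restricted wreath product `H ≀ ℤ`. -/
abbrev WreathZ := RWBase H ⋊[shiftHom H] Multiplicative ℤ

/-- The base subgroup `A` of `H ≀ ℤ`. -/
def wreathBase : Subgroup (WreathZ H) := (SemidirectProduct.inl (φ := shiftHom H)).range

/-- The generator `t` of the head `ℤ`. -/
def tGen : WreathZ H := SemidirectProduct.inr (Multiplicative.ofAdd 1)

/-- The element of the base supported at `0` with value `h`. -/
def single0 (h : H) : RWBase H :=
  ⟨fun i => if i = 0 then h else 1, by
    refine Set.Finite.subset (Set.finite_singleton (0 : ℤ)) fun i hi => ?_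
    rw [mem_mulSupport] at hi
    by_contra h0
    exact hi (if_neg h0)⟩

/-- The inclusion of `H` as the copy at coordinate `0`. -/
def incl0 (h : H) : WreathZ H := SemidirectProduct.inl (single0 H h)

/-- If `g = w t^k` with `w ∈ A` and `k ≠ 0`, then no nontrivial element of the
base commutes with `g`; i.e. `C_G(g) ⊓ A = ⊥`. -/
theorem centralizer_inf_base_eq_bot {H : Type*} [Group H]
    (w : RWBase H) (k : ℤ) (hk : k ≠ 0)
    (g : WreathZ H)
    (hg : g = SemidirectProduct.inl w * SemidirectProduct.inr (Multiplicative.ofAdd k)) :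
    Subgroup.centralizer {g} ⊓ wreathBase H = ⊥ := by
  rw [eq_bot_iff]
  rintro x ⟨hc, hb⟩
  obtain ⟨v, rfl⟩ := hb
  have hc' : SemidirectProduct.inl v ∈ Subgroup.centralizer {g} := hc
  rw [Subgroup.mem_centralizer_iff] at hc'
  have hcomm := hc' g (Set.mem_singleton g)
  rw [hg] at hcomm
  -- equate the left components
  have hleft := congrArg SemidirectProduct.left hcomm
  simp only [SemidirectProduct.mul_left, SemidirectProduct.left_inl, SemidirectProduct.left_inr,
    SemidirectProduct.right_inl, SemidirectProduct.right_inr, map_one, mul_one, one_mul] at hleft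
  have hpt : ∀ i : ℤ, (w : ℤ → H) i * (v : ℤ → H) (i - k) = (v : ℤ → H) i * (w : ℤ → H) i := by
    intro i
    have := congrFun (congrArg (Subtype.val) hleft) i
    have hr : Multiplicative.toAdd (SemidirectProduct.inl w * SemidirectProduct.inr (Multiplicative.ofAdd k) : WreathZ H).right = k := by simp
    simp [shiftHom, shiftAut, MulAut.one_apply] at this
    convert this using 4
    exact hr.symm
  -- support of v is closed under adding k
  have hstep : ∀ i : ℤ, (v : ℤ → H) i ≠ 1 → (v : ℤ → H) (i + k) ≠ 1 := by
    intro i hi hcontra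
    have := hpt (i + k)
    rw [hcontra, one_mul, add_sub_cancel_right] at this
    exact hi (mul_eq_left.mp this)
  have hv : v = 1 := by
    by_contra hv1
    have : ∃ i : ℤ, (v : ℤ → H) i ≠ 1 := by
      by_contra hno
      push_neg at hno
      exact hv1 (Subtype.ext (funext hno))
    obtain ⟨i0, hi0⟩ := this
    have hmem : ∀ n : ℕ, (v : ℤ → H) (i0 + n * k) ≠ 1 := by
      intro n
      induction n with
      | zero => simpa using hi0
      | succ m ih =>
        have := hstep _ ih
        have harith : (i0 + m * k) + k = i0 + (m + 1 : ℕ) * k := by push_cast; ring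
        rwa [harith] at this
    have hinj : Function.Injective (fun n : ℕ => i0 + n * k) := by
      intro a b hab
      simp only at hab
      have : (a : ℤ) * k = b * k := by omega
      exact_mod_cast mul_right_cancel₀ hk this
    have hinf : (mulSupport (v : ℤ → H)).Infinite :=
      Set.infinite_of_injective_forall_mem hinj (fun n => hmem n)
    exact hinf v.2
  rw [hv, map_one]
  exact Subgroup.mem_bot.mpr rfl
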